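/- If E ⊆ A ⊆ ℝ and A is I-sparse at x ∈ ℝ, then E is I-sparse at x; that is, S_I(x) is closed under taking subsets. -/

import Mathlib

open MeasureTheory Filter Set
open scoped ENNReal

noncomputable section

/-- A nontrivial admissible ideal of subsets of ℕ: closed under subsets and
finite unions, contains every finite set, and does not contain ℕ itself. -/
structure AdmissibleIdeal : Type where
  carrier : Set (Set ℕ)
  subset_mem : ∀ ⦃A B : Set ℕ⦄, A ∈ carrier → B ⊆ A → B ∈ carrier
  union_mem : ∀ ⦃A B : Set ℕ⦄, A ∈ carrier → B ∈ carrier → A ∪ B ∈ carrier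
  finite_mem : ∀ A : Set ℕ, A.Finite → A ∈ carrier
  univ_not_mem : (Set.univ : Set ℕ) ∉ carrier

/-- The filter F(I) = {M ⊆ ℕ : ℕ \ M ∈ I} associated with the ideal I. -/
def AdmissibleIdeal.filter (I : AdmissibleIdeal) : Filter ℕ :=
  Filter.comk (· ∈ I.carrier) (I.finite_mem ∅ Set.finite_empty)
    (fun _t ht _s hs => I.subset_mem ht hs)
    (fun _s hs _t ht => I.union_mem hs ht)

/-- A sequence of closed intervals admissible about the point `p`:
each `J n` is a closed interval containing `p`, and
`{n : 0 < λ(J n) < 1/n} ∈ F(I)`. -/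
def AdmissibleSeq (I : AdmissibleIdeal) (p : ℝ) (J : ℕ → Set ℝ) : Prop :=
  (∀ n, ∃ a b : ℝ, a ≤ b ∧ J n = Set.Icc a b) ∧ (∀ n, p ∈ J n) ∧
    {n : ℕ | 0 < volume (J n) ∧ volume (J n) < (n : ℝ≥0∞)⁻¹} ∈ I.filter

/-- The sequence n ↦ λ(E ∩ J n)/λ(J n) (interpreted as 0 when λ(J n) = 0). -/
def ratioSeq (E : Set ℝ) (J : ℕ → Set ℝ) : ℕ → ℝ :=
  fun n => (volume (E ∩ J n) / volume (J n)).toReal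

/-- Upper I-density of `E` at `p`: sup over admissible sequences of the
limsup along `F(I)` of the measure ratios. -/
def upperIDensity (I : AdmissibleIdeal) (p : ℝ) (E : Set ℝ) : ℝ :=
  sSup {l : ℝ | ∃ J : ℕ → Set ℝ, AdmissibleSeq I p J ∧
    l = Filter.limsup (ratioSeq E J) I.filter}

/-- Lower I-density of `E` at `p`: inf over admissible sequences of the
liminf along `F(I)` of the measure ratios. -/
def lowerIDensity (I : AdmissibleIdeal) (p : ℝ) (E : Set ℝ) : ℝ :=
  sInf {l : ℝ | ∃ J : ℕ → Set ℝ, AdmissibleSeq I p J ∧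
    l = Filter.liminf (ratioSeq E J) I.filter}

/-- `C` is a measurable cover of `A`. -/
def IsMeasurableCover (C A : Set ℝ) : Prop :=
  MeasurableSet C ∧ A ⊆ C ∧
    ∀ F : Set ℝ, MeasurableSet F → F ⊆ C \ A → volume F = 0

/-- `A` is I-sparse at `x`, i.e. `A ∈ S_I(x)`. -/
def ISparseAt (I : AdmissibleIdeal) (A : Set ℝ) (x : ℝ) : Prop :=
  ∀ B : Set ℝ, MeasurableSet B → upperIDensity I x B < 1 →
    ∀ C : Set ℝ, IsMeasurableCover C A → upperIDensity I x (C ∪ B) < 1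

/-- The I-density topology T_I. -/
def IDensityTopology (I : AdmissibleIdeal) : Set (Set ℝ) :=
  {E | MeasurableSet E ∧ ∀ x ∈ E, lowerIDensity I x E = 1}

/-- The I-sparse set topology 𝒰. -/
def sparseTop (I : AdmissibleIdeal) : Set (Set ℝ) :=
  {E | ∀ x ∈ E, ISparseAt I Eᶜ x}


/-- The filter `F(I)` is nontrivial. -/
lemma AdmissibleIdeal.filter_neBot (I : AdmissibleIdeal) : I.filter.NeBot := by
  refine ⟨fun h => I.univ_not_mem ?_⟩
  have : (∅ : Set ℕ) ∈ I.filter := h ▸ Filter.mem_bot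
  simpa [AdmissibleIdeal.filter, Filter.mem_comk] using this

lemma ratioSeq_nonneg (E : Set ℝ) (J : ℕ → Set ℝ) (n : ℕ) : 0 ≤ ratioSeq E J n :=
  ENNReal.toReal_nonneg

lemma ratio_div_le_one (E : Set ℝ) (J : ℕ → Set ℝ) (n : ℕ) :
    volume (E ∩ J n) / volume (J n) ≤ 1 :=
  ENNReal.div_le_of_le_mul (by simpa using measure_mono (Set.inter_subset_right : E ∩ J n ⊆ J n))

lemma ratioSeq_le_one (E : Set ℝ) (J : ℕ → Set ℝ) (n : ℕ) : ratioSeq E J n ≤ 1 := by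
  have h := ratio_div_le_one E J n
  have := ENNReal.toReal_mono ENNReal.one_ne_top h
  simpa [ratioSeq] using this

lemma ratioSeq_mono {S T : Set ℝ} (hST : S ⊆ T) (J : ℕ → Set ℝ) (n : ℕ) :
    ratioSeq S J n ≤ ratioSeq T J n := by
  have hnum : volume (S ∩ J n) ≤ volume (T ∩ J n) :=
    measure_mono (Set.inter_subset_inter_left _ hST)
  have hdiv : volume (S ∩ J n) / volume (J n) ≤ volume (T ∩ J n) / volume (J n) :=
    ENNReal.div_le_div_right hnum _
  have hfin : volume (T ∩ J n) / volume (J n) ≠ ⊤ :=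
    ne_top_of_le_ne_top ENNReal.one_ne_top (ratio_div_le_one T J n)
  exact ENNReal.toReal_mono hfin hdiv

/-- A canonical admissible sequence about any point. -/
lemma exists_admissibleSeq (I : AdmissibleIdeal) (p : ℝ) :
    AdmissibleSeq I p (fun n => Set.Icc p (p + (2 * ((n : ℝ) + 1))⁻¹)) := by
  have hpos : ∀ n : ℕ, (0:ℝ) < (2 * ((n : ℝ) + 1))⁻¹ := by
    intro n; positivity
  refine ⟨fun n => ⟨p, p + (2 * ((n : ℝ) + 1))⁻¹, by linarith [hpos n], rfl⟩,
    fun n => ⟨le_refl p, by linarith [hpos n]⟩, ?_⟩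
  have hall : ∀ n : ℕ, 0 < volume (Set.Icc p (p + (2 * ((n : ℝ) + 1))⁻¹)) ∧
      volume (Set.Icc p (p + (2 * ((n : ℝ) + 1))⁻¹)) < ((n : ℝ≥0∞))⁻¹ := by
    intro n
    have hv : volume (Set.Icc p (p + (2 * ((n : ℝ) + 1))⁻¹)) =
        ENNReal.ofReal ((2 * ((n : ℝ) + 1))⁻¹) := by
      rw [Real.volume_Icc]; ring_nf
    constructor
    · rw [hv]; exact ENNReal.ofReal_pos.mpr (hpos n)
    · rw [hv]
      rcases Nat.eq_zero_or_pos n with hn | hn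
      · subst hn; simp [ENNReal.ofReal_lt_top]
      · have hnR : (0:ℝ) < (n : ℝ) := by exact_mod_cast hn
        have : ((n : ℝ≥0∞))⁻¹ = ENNReal.ofReal ((n : ℝ))⁻¹ := by
          rw [ENNReal.ofReal_inv_of_pos hnR, ENNReal.ofReal_natCast]
        rw [this]
        refine (ENNReal.ofReal_lt_ofReal_iff (by positivity)).mpr ?_
        have h2 : (n : ℝ) < 2 * ((n : ℝ) + 1) := by linarith
        exact inv_strictAnti₀ hnR h2
  have : {n : ℕ | 0 < volume (Set.Icc p (p + (2 * ((n : ℝ) + 1))⁻¹)) ∧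
      volume (Set.Icc p (p + (2 * ((n : ℝ) + 1))⁻¹)) < ((n : ℝ≥0∞))⁻¹} = Set.univ := by
    ext n; simpa using hall n
  rw [this]; exact Filter.univ_mem

lemma upperIDensity_mono (I : AdmissibleIdeal) (p : ℝ) {S T : Set ℝ} (hST : S ⊆ T) :
    upperIDensity I p S ≤ upperIDensity I p T := by
  have hne := I.filter_neBot
  have hbddT : BddAbove {l : ℝ | ∃ J : ℕ → Set ℝ, AdmissibleSeq I p J ∧
      l = Filter.limsup (ratioSeq T J) I.filter} := by
    refine ⟨1, fun l hl => ?_⟩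
    obtain ⟨J, _, rfl⟩ := hl
    haveI := hne
    refine Filter.limsup_le_of_le ?_ (Filter.Eventually.of_forall (ratioSeq_le_one T J))
    exact Filter.isCoboundedUnder_le_of_le I.filter (fun n => ratioSeq_nonneg T J n)
  have hneS : {l : ℝ | ∃ J : ℕ → Set ℝ, AdmissibleSeq I p J ∧
      l = Filter.limsup (ratioSeq S J) I.filter}.Nonempty :=
    ⟨_, _, exists_admissibleSeq I p, rfl⟩
  refine csSup_le hneS ?_
  rintro l ⟨J, hJ, rfl⟩
  have h1 : Filter.limsup (ratioSeq S J) I.filter ≤ Filter.limsup (ratioSeq T J) I.filter := by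
    refine Filter.limsup_le_limsup (Filter.Eventually.of_forall (ratioSeq_mono hST J)) ?_ ?_
    · haveI := hne
      exact Filter.isCoboundedUnder_le_of_le I.filter (fun n => ratioSeq_nonneg S J n)
    · exact Filter.isBoundedUnder_of ⟨1, fun n => ratioSeq_le_one T J n⟩
  exact h1.trans (le_csSup hbddT ⟨J, hJ, rfl⟩)

lemma cover_extend {C A E : Set ℝ} (hEA : E ⊆ A) (hC : IsMeasurableCover C E) :
    IsMeasurableCover (C ∪ toMeasurable volume (A \ C)) A := by
  obtain ⟨hCm, hEC, hCnull⟩ := hC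
  refine ⟨hCm.union (measurableSet_toMeasurable _ _), ?_, ?_⟩
  · intro a ha
    by_cases h : a ∈ C
    · exact Or.inl h
    · exact Or.inr (subset_toMeasurable _ _ ⟨ha, h⟩)
  · intro F hF hFsub
    have h1 : volume (F ∩ C) = 0 := by
      refine hCnull _ (hF.inter hCm) ?_
      intro a ⟨haF, haC⟩
      exact ⟨haC, fun haE => (hFsub haF).2 (hEA haE)⟩
    have h2 : volume (F \ C) = 0 := by
      have hsub : F \ C ⊆ toMeasurable volume (A \ C) := by
        intro a ⟨haF, haC⟩
        rcases (hFsub haF).1 with h | h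
        · exact absurd h haC
        · exact h
      have hkey : volume (toMeasurable volume (A \ C) ∩ (F \ C)) = volume ((A \ C) ∩ (F \ C)) :=
        MeasureTheory.Measure.measure_toMeasurable_inter_of_sFinite (hF.diff hCm) (A \ C)
      have hzero : (A \ C) ∩ (F \ C) = ∅ := by
        ext a
        simp only [Set.mem_inter_iff, Set.mem_diff, Set.mem_empty_iff_false, iff_false]
        rintro ⟨⟨haA, -⟩, haF, -⟩
        exact (hFsub haF).2 haA
      have hle : volume (F \ C) ≤ volume (toMeasurable volume (A \ C) ∩ (F \ C)) :=
        measure_mono (Set.subset_inter hsub Set.Subset.rfl)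
      rw [hkey, hzero] at hle
      simpa using hle
    have hle2 : volume F ≤ volume (F ∩ C) + volume (F \ C) := by
      have := measure_union_le (μ := volume) (F ∩ C) (F \ C)
      rwa [Set.inter_union_diff] at this
    simpa [h1, h2] using le_antisymm (by simpa [h1, h2] using hle2) zero_le

/-- S_I(x) is closed under taking subsets. -/
theorem iSparseAt_subset (I : AdmissibleIdeal) (A E : Set ℝ) (x : ℝ)
    (hEA : E ⊆ A) (hA : ISparseAt I A x) :
    ISparseAt I E x := by
  intro B hB hBd C hC
  have hC' := cover_extend hEA hC
  have h := hA B hB hBd _ hC'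
  calc upperIDensity I x (C ∪ B)
      ≤ upperIDensity I x ((C ∪ toMeasurable volume (A \ C)) ∪ B) :=
        upperIDensity_mono I x (Set.union_subset_union_left _ Set.subset_union_left)
    _ < 1 := h
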